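/- Let Λ be a positive definite O-lattice over a totally real number field K, with min(Λ) = min{ N_{K/Q}(Q(x)) : 0 ≠ x ∈ Λ }. If v is a minimal vector of Λ (i.e. N_{K/Q}(Q(v)) = min(Λ)) and b⁻¹ is the coefficient ideal of v relative to Λ, then b is an integral ideal of minimal norm in its ideal class. -/

import Mathlib

open NumberField Module
open scoped nonZeroDivisors

/-- If v is a minimal vector of a positive definite O-lattice Λ over a totally real number
field and b⁻¹ is the coefficient ideal of v relative to Λ, then b is an integral ideal of
minimal (absolute) norm in its ideal class. -/
theorem coeff_ideal_of_minimal_vector_min_norm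
    (K : Type*) [Field K] [NumberField K]
    (htr : Fintype.card (K →+* ℝ) = finrank ℚ K)
    (V : Type*) [AddCommGroup V] [Module K V] [Module (𝓞 K) V] [IsScalarTower (𝓞 K) K V]
    (Q : QuadraticForm K V)
    (hQpos : ∀ x : V, x ≠ 0 → ∀ ν : K →+* ℝ, 0 < ν (Q x))
    (Λ : Submodule (𝓞 K) V)
    (v : V) (hvΛ : v ∈ Λ) (hv0 : v ≠ 0)
    (hmin : ∀ x ∈ Λ, x ≠ 0 → Algebra.norm ℚ (Q v) ≤ Algebra.norm ℚ (Q x))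
    (b : Ideal (𝓞 K)) (hb : b ≠ 0)
    (hcoeff : ∀ α : K, α • v ∈ Λ ↔ α ∈ ((b : FractionalIdeal (𝓞 K)⁰ K)⁻¹)) :
    ∀ c : Ideal (𝓞 K), c ≠ 0 →
      (∃ γ : K, γ ≠ 0 ∧
        FractionalIdeal.spanSingleton (𝓞 K)⁰ γ * (b : FractionalIdeal (𝓞 K)⁰ K) =
          (c : FractionalIdeal (𝓞 K)⁰ K)) →
      Ideal.absNorm b ≤ Ideal.absNorm c := by
  intro c hc ⟨γ, hγ0, hγ⟩
  -- positivity of norms of totally positive elements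
  have hposnorm : ∀ y : K, (∀ ν : K →+* ℝ, 0 < ν y) → 0 < Algebra.norm ℚ y := by
    intro y hy
    set f : (K →+* ℝ) → (K →+* ℂ) := fun ν => Complex.ofRealHom.comp ν with hf
    have hinj : Function.Injective f := by
      intro ν₁ ν₂ h
      ext x
      exact Complex.ofReal_injective (RingHom.congr_fun h x)
    have hbij : Function.Bijective f :=
      (Fintype.bijective_iff_injective_and_card f).mpr
        ⟨hinj, by rw [htr, NumberField.Embeddings.card K ℂ]⟩
    have h1 : (algebraMap ℚ ℂ) (Algebra.norm ℚ y) = ∏ σ : K →ₐ[ℚ] ℂ, σ y :=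
      Algebra.norm_eq_prod_embeddings ℚ ℂ y
    have h2 : ∏ σ : K →ₐ[ℚ] ℂ, σ y = ∏ σ : K →+* ℂ, σ y :=
      (Fintype.prod_equiv (RingHom.equivRatAlgHom K ℂ) (fun σ => σ y) (fun σ => σ y)
        (fun σ => by simp [RingHom.equivRatAlgHom_apply])).symm
    have h3 : ∏ σ : K →+* ℂ, σ y = ∏ ν : K →+* ℝ, ((ν y : ℝ) : ℂ) :=
      (Fintype.prod_bijective f hbij _ _ (fun ν => rfl)).symm
    have h4 : ((Algebra.norm ℚ y : ℝ) : ℂ) = ((∏ ν : K →+* ℝ, ν y : ℝ) : ℂ) := by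
      rw [Complex.ofReal_prod, ← h3, ← h2, ← h1]
      simp [Complex.ofReal_ratCast]
    have h5 : (Algebra.norm ℚ y : ℝ) = ∏ ν : K →+* ℝ, ν y :=
      Complex.ofReal_injective h4
    have h6 : (0 : ℝ) < ∏ ν : K →+* ℝ, ν y :=
      Finset.prod_pos (fun ν _ => hy ν)
    rw [← h5] at h6
    exact_mod_cast h6
  have hQv : 0 < Algebra.norm ℚ (Q v) := hposnorm (Q v) (hQpos v hv0)
  -- γ ∈ b⁻¹, so γ • v ∈ Λ
  have hbne : (b : FractionalIdeal (𝓞 K)⁰ K) ≠ 0 := by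
    simpa [FractionalIdeal.coeIdeal_eq_zero] using hb
  have hspan : FractionalIdeal.spanSingleton (𝓞 K)⁰ γ =
      (c : FractionalIdeal (𝓞 K)⁰ K) * (b : FractionalIdeal (𝓞 K)⁰ K)⁻¹ := by
    rw [← hγ, mul_assoc, mul_inv_cancel₀ hbne, mul_one]
  have hmem : γ ∈ ((b : FractionalIdeal (𝓞 K)⁰ K)⁻¹) := by
    have h1 : γ ∈ FractionalIdeal.spanSingleton (𝓞 K)⁰ γ :=
      FractionalIdeal.mem_spanSingleton_self _ _
    rw [hspan] at h1
    have h2 : (c : FractionalIdeal (𝓞 K)⁰ K) * (b : FractionalIdeal (𝓞 K)⁰ K)⁻¹ ≤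
        1 * (b : FractionalIdeal (𝓞 K)⁰ K)⁻¹ :=
      mul_le_mul' FractionalIdeal.coeIdeal_le_one le_rfl
    rw [one_mul] at h2
    exact h2 h1
  have hγv : γ • v ∈ Λ := (hcoeff γ).mpr hmem
  have hγv0 : γ • v ≠ 0 := smul_ne_zero hγ0 hv0
  -- minimality gives 1 ≤ |N γ|
  have hQs : Q (γ • v) = γ * γ * Q v := QuadraticMap.map_smul Q γ v
  have hle := hmin (γ • v) hγv hγv0
  rw [hQs, map_mul, map_mul] at hle
  set n : ℚ := Algebra.norm ℚ γ with hn
  have hnn : 1 ≤ n * n := by nlinarith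
  have h1n : 1 ≤ |n| := by nlinarith [abs_nonneg n, abs_mul_abs_self n]
  -- translate to absolute norms of ideals
  have habs := congrArg FractionalIdeal.absNorm hγ
  rw [map_mul, FractionalIdeal.absNorm_span_singleton, FractionalIdeal.coeIdeal_absNorm,
    FractionalIdeal.coeIdeal_absNorm] at habs
  have hfin : (Ideal.absNorm b : ℚ) ≤ (Ideal.absNorm c : ℚ) := by
    rw [← habs, ← hn]
    nlinarith [Nat.cast_nonneg (α := ℚ) (Ideal.absNorm b)]
  exact_mod_cast hfin
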